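/- Let F be a field of characteristic 2 and let h be the Heisenberg algebra over F with basis (e₁, e₂, e₃). A map ω : h → h satisfies the three 2-map axioms (ω(λu) = λ²·ω(u); ⁅u, ω(v)⁆ = ⁅⁅u,v⁆, v⁆; ω(u+v) = ω(u) + ω(v) + ⁅u,v⁆, for all λ ∈ F and u, v ∈ h) if and only if there exist a, b, c ∈ F such that ω(α·e₁ + β·e₂ + γ·e₃) = (α²·a + β²·b + γ²·c + α·β)·e₃ for all α, β, γ ∈ F. -/

import Mathlib

/-- Over a field of characteristic 2, the 2-maps on the Heisenberg algebra are exactly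
the maps `α•E0 + β•E1 + γ•E2 ↦ (α²a + β²b + γ²c + αβ) • E2` for scalars `a, b, c`. -/
theorem statement17 (F : Type*) [Field F] [CharP F 2]
    (h : Type*) [LieRing h] [LieAlgebra F h]
    (E : Module.Basis (Fin 3) F h)
    (hE01 : ⁅E 0, E 1⁆ = E 2) (hE02 : ⁅E 0, E 2⁆ = 0) (hE12 : ⁅E 1, E 2⁆ = 0)
    (ω : h → h) :
    ((∀ (c : F) (u : h), ω (c • u) = c ^ 2 • ω u) ∧
     (∀ u v : h, ⁅u, ω v⁆ = ⁅⁅u, v⁆, v⁆) ∧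
     (∀ u v : h, ω (u + v) = ω u + ω v + ⁅u, v⁆)) ↔
    ∃ a b c : F, ∀ α β γ : F,
      ω (α • E 0 + β • E 1 + γ • E 2) = (α ^ 2 * a + β ^ 2 * b + γ ^ 2 * c + α * β) • E 2 := by
  have htwo : (2 : F) = 0 := CharTwo.two_eq_zero
  have hE10 : ⁅E 1, E 0⁆ = -E 2 := by rw [← lie_skew, hE01]
  have hE20 : ⁅E 2, E 0⁆ = 0 := by rw [← lie_skew, hE02, neg_zero]
  have hE21 : ⁅E 2, E 1⁆ = 0 := by rw [← lie_skew, hE12, neg_zero]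
  have brak : ∀ α β γ α' β' γ' : F,
      ⁅α • E 0 + β • E 1 + γ • E 2, α' • E 0 + β' • E 1 + γ' • E 2⁆
        = (α * β' - α' * β) • E 2 := by
    intro α β γ α' β' γ'
    simp only [lie_add, add_lie, lie_smul, smul_lie, lie_self, hE01, hE02, hE12, hE10,
      hE20, hE21, smul_zero, zero_add, add_zero, smul_neg, smul_smul]
    rw [sub_smul]
    abel_nf
    module
  have repr3 : ∀ u : h, u = E.repr u 0 • E 0 + E.repr u 1 • E 1 + E.repr u 2 • E 2 := by
    intro u
    have := Module.Basis.sum_repr E u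
    rw [Fin.sum_univ_three] at this
    exact this.symm
  have hE2ne : E 2 ≠ 0 := E.ne_zero 2
  constructor
  · rintro ⟨h1, h2, h3⟩
    have hcent : ∀ x : h, ⁅E 0, x⁆ = 0 → ⁅E 1, x⁆ = 0 → ∃ s : F, x = s • E 2 := by
      intro x hx0 hx1
      have hx := repr3 x
      set α := E.repr x 0; set β := E.repr x 1; set γ := E.repr x 2
      have e0 : ⁅E 0, x⁆ = β • E 2 := by
        conv_lhs => rw [hx]
        have := brak 1 0 0 α β γ
        simp only [one_smul, zero_smul, add_zero, zero_add] at this ⊢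
        rw [this]; ring_nf
      have e1 : ⁅E 1, x⁆ = -(α • E 2) := by
        conv_lhs => rw [hx]
        have := brak 0 1 0 α β γ
        simp only [one_smul, zero_smul, add_zero, zero_add] at this ⊢
        rw [this]; rw [show (0 : F) * β - α * 1 = -α by ring, neg_smul]
      have hβ : β = 0 := by
        rw [e0] at hx0
        exact (smul_eq_zero.mp hx0).resolve_right hE2ne
      have hα : α = 0 := by
        rw [e1, neg_eq_zero] at hx1
        exact (smul_eq_zero.mp hx1).resolve_right hE2ne
      exact ⟨γ, by rw [hx, hα, hβ]; simp⟩
    obtain ⟨a, ha⟩ := hcent (ω (E 0))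
      (by rw [h2, lie_self, zero_lie])
      (by rw [h2, hE10, neg_lie, hE20, neg_zero])
    obtain ⟨b, hb⟩ := hcent (ω (E 1))
      (by rw [h2, hE01, hE21])
      (by rw [h2, lie_self, zero_lie])
    obtain ⟨c, hc⟩ := hcent (ω (E 2))
      (by rw [h2, hE02, zero_lie])
      (by rw [h2, hE12, zero_lie])
    refine ⟨a, b, c, fun α β γ => ?_⟩
    have s1 : ω (α • E 0) = (α ^ 2 * a) • E 2 := by rw [h1, ha, smul_smul]
    have s2 : ω (β • E 1) = (β ^ 2 * b) • E 2 := by rw [h1, hb, smul_smul]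
    have s3 : ω (γ • E 2) = (γ ^ 2 * c) • E 2 := by rw [h1, hc, smul_smul]
    have b1 : ⁅β • E 1, γ • E 2⁆ = 0 := by
      rw [smul_lie, lie_smul, hE12, smul_zero, smul_zero]
    have b2 : ⁅α • E 0, β • E 1 + γ • E 2⁆ = (α * β) • E 2 := by
      rw [lie_add, smul_lie, smul_lie, lie_smul, lie_smul, hE01, hE02, smul_zero,
        smul_zero, add_zero, smul_smul]
    rw [add_assoc, h3, h3, s1, s2, s3, b1, b2, add_zero]
    rw [← add_smul, ← add_smul, ← add_smul]
    congr 1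
    ring
  · rintro ⟨a, b, c, hω⟩
    have key : ∀ u : h, ω u = (E.repr u 0 ^ 2 * a + E.repr u 1 ^ 2 * b
        + E.repr u 2 ^ 2 * c + E.repr u 0 * E.repr u 1) • E 2 := by
      intro u
      conv_lhs => rw [repr3 u]
      exact hω _ _ _
    have brk : ∀ u v : h, ⁅u, v⁆
        = (E.repr u 0 * E.repr v 1 - E.repr v 0 * E.repr u 1) • E 2 := by
      intro u v
      conv_lhs => rw [repr3 u, repr3 v]
      exact brak _ _ _ _ _ _
    have hE2rep : ∀ i, E.repr (E 2) i = if 2 = i then 1 else 0 := by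
      intro i; rw [E.repr_self]; exact Finsupp.single_apply
    have smulrep : ∀ (s : F) (u : h) (i : Fin 3), E.repr (s • u) i = s * E.repr u i := by
      intro s u i; simp
    have addrep : ∀ (u v : h) (i : Fin 3), E.repr (u + v) i = E.repr u i + E.repr v i := by
      intro u v i; simp
    refine ⟨fun s u => ?_, fun u v => ?_, fun u v => ?_⟩
    · rw [key (s • u), key u, smul_smul]
      congr 1
      simp only [smulrep]
      ring
    · rw [key v, lie_smul, brk u (E 2), brk ⁅u, v⁆ v, brk u v]
      simp only [hE2rep, smulrep]
      simp
    · rw [key (u + v), key u, key v, brk u v, ← add_smul, ← add_smul]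
      congr 1
      simp only [addrep]
      linear_combination (E.repr u 0 * E.repr v 0 * a + E.repr u 1 * E.repr v 1 * b
        + E.repr u 2 * E.repr v 2 * c + E.repr v 0 * E.repr u 1) * htwo
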